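/- Let T, S be A-bounded with m_A(S) > 0, where m_A(S) = inf{‖Sx‖_A : ‖x‖_A = 1}. Then there exists a unique ζ₀ ∈ ℂ such that ‖(T + ζ₀S) + γS‖_A² ≥ ‖T + ζ₀S‖_A² + |γ|² m_A(S)² for every γ ∈ ℂ. -/

import Mathlib

noncomputable section

open Filter Topology

variable {H : Type*} [NormedAddCommGroup H] [InnerProductSpace ℂ H]

/-- The semi-inner product induced by `A`: `⟨x, y⟩_A = ⟨A x, y⟩`. -/
def innerA (A : H →L[ℂ] H) (x y : H) : ℂ := @inner ℂ _ _ (A x) y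

/-- The seminorm induced by `A`: `‖x‖_A = √⟨A x, x⟩`. -/
def normA (A : H →L[ℂ] H) (x : H) : ℝ := Real.sqrt (innerA A x x).re

/-- The operator seminorm induced by `A`. -/
def opNormA (A T : H →L[ℂ] H) : ℝ :=
  sSup {r : ℝ | ∃ x : H, normA A x = 1 ∧ r = normA A (T x)}

/-- `T` is `A`-bounded. -/
def ABounded (A T : H →L[ℂ] H) : Prop :=
  ∃ c > 0, ∀ x : H, normA A (T x) ≤ c * normA A x

/-- The `A`-minimum modulus. -/
def mA (A S : H →L[ℂ] H) : ℝ :=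
  sInf {r : ℝ | ∃ x : H, normA A x = 1 ∧ r = normA A (S x)}

set_option linter.unusedSectionVars false
set_option linter.unusedVariables false

section helpers
variable [CompleteSpace H] {A : H →L[ℂ] H}

lemma innerA_self_re_nonneg (hA : A.IsPositive) (x : H) : 0 ≤ (innerA A x x).re :=
  (Complex.le_def.mp (hA.inner_nonneg_left x)).1

lemma normA_nonneg (x : H) : 0 ≤ normA A x := Real.sqrt_nonneg _

lemma normA_sq (hA : A.IsPositive) (x : H) : normA A x ^ 2 = (innerA A x x).re :=
  Real.sq_sqrt (innerA_self_re_nonneg hA x)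

lemma innerA_conj_symm (hA : A.IsPositive) (u v : H) :
    innerA A v u = starRingEnd ℂ (innerA A u v) := by
  unfold innerA
  rw [← inner_conj_symm]
  congr 1
  exact (hA.isSymmetric u v).symm

lemma expandA (hA : A.IsPositive) (u v : H) (c : ℂ) :
    (innerA A (u + c • v) (u + c • v)).re
      = (innerA A u u).re + 2 * (c * innerA A u v).re
        + ‖c‖ ^ 2 * (innerA A v v).re := by
  have h1 : innerA A (u + c • v) (u + c • v)
      = innerA A u u + c * innerA A u v + starRingEnd ℂ c * innerA A v u
        + (starRingEnd ℂ c) * c * innerA A v v := by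
    unfold innerA
    simp only [map_add, map_smul]
    rw [inner_add_left, inner_add_right, inner_add_right,
      inner_smul_left, inner_smul_right, inner_smul_left, inner_smul_right]
    ring
  rw [h1, innerA_conj_symm hA u v]
  simp [Complex.add_re, Complex.mul_re, Complex.conj_re, Complex.conj_im, Complex.sq_norm,
    Complex.normSq_apply]
  ring
end helpers

section more
variable [CompleteSpace H] {A : H →L[ℂ] H}

lemma normA_smul (hA : A.IsPositive) (c : ℂ) (x : H) :
    normA A (c • x) = ‖c‖ * normA A x := by
  have h : innerA A (c • x) (c • x) = ((‖c‖ ^ 2 : ℝ) : ℂ) * innerA A x x := by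
    unfold innerA
    rw [map_smul, inner_smul_left, inner_smul_right]
    rw [← mul_assoc, mul_comm (starRingEnd ℂ c) c, Complex.mul_conj, Complex.normSq_eq_norm_sq]
  unfold normA
  rw [h, Complex.re_ofReal_mul, Real.sqrt_mul (sq_nonneg _),
    Real.sqrt_sq (norm_nonneg c)]

lemma keyA (hA : A.IsPositive) (u v : H) {t : ℝ} (ht : 0 ≤ t) :
    0 ≤ (innerA A u u).re - 2 * t * ‖innerA A u v‖ ^ 2
      + t ^ 2 * ‖innerA A u v‖ ^ 2 * (innerA A v v).re := by
  have h0 := innerA_self_re_nonneg hA (u + (-(t:ℂ) * starRingEnd ℂ (innerA A u v)) • v)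
  rw [expandA hA u v (-(t:ℂ) * starRingEnd ℂ (innerA A u v))] at h0
  have h1 : (-(t:ℂ) * starRingEnd ℂ (innerA A u v) * innerA A u v).re
      = -(t * ‖innerA A u v‖ ^ 2) := by
    have hcb : starRingEnd ℂ (innerA A u v) * innerA A u v
        = ((‖innerA A u v‖ ^ 2 : ℝ) : ℂ) := by
      rw [mul_comm, Complex.mul_conj, Complex.normSq_eq_norm_sq]
    rw [mul_assoc, hcb, ← Complex.ofReal_neg, ← Complex.ofReal_mul, Complex.ofReal_re]
    ring
  have h2 : ‖-(t:ℂ) * starRingEnd ℂ (innerA A u v)‖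
      = t * ‖innerA A u v‖ := by
    rw [norm_mul, norm_neg, Complex.norm_real, Complex.norm_conj, Real.norm_of_nonneg ht]
  rw [h1, h2] at h0
  nlinarith [h0]

lemma cauchyA (hA : A.IsPositive) (u v : H) :
    ‖innerA A u v‖ ≤ normA A u * normA A v := by
  have hu := innerA_self_re_nonneg hA u
  have hv := innerA_self_re_nonneg hA v
  have hsq : ‖innerA A u v‖ ^ 2 ≤ (innerA A u u).re * (innerA A v v).re := by
    by_cases hbz : innerA A u v = 0
    · rw [hbz]; simpa using mul_nonneg hu hv
    have hB : 0 < ‖innerA A u v‖ ^ 2 := by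
      have := norm_pos_iff.mpr hbz; positivity
    rcases eq_or_lt_of_le hv with hv0 | hvpos
    · exfalso
      have ht : (0:ℝ) ≤ ((innerA A u u).re + 1) / (2 * ‖innerA A u v‖ ^ 2) := by
        positivity
      have h := keyA hA u v ht
      rw [← hv0] at h
      have e : 2 * (((innerA A u u).re + 1) / (2 * ‖innerA A u v‖ ^ 2))
          * ‖innerA A u v‖ ^ 2 = (innerA A u u).re + 1 := by
        field_simp
      rw [mul_zero] at h
      linarith [h, e]
    · have ht : (0:ℝ) ≤ 1 / (innerA A v v).re := by positivity
      have h := keyA hA u v ht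
      have hne : (innerA A v v).re ≠ 0 := ne_of_gt hvpos
      have h2 : 0 ≤ ((innerA A u u).re - 2 * (1 / (innerA A v v).re)
            * ‖innerA A u v‖ ^ 2
          + (1 / (innerA A v v).re) ^ 2 * ‖innerA A u v‖ ^ 2
            * (innerA A v v).re) * (innerA A v v).re := mul_nonneg h hvpos.le
      have e : ((innerA A u u).re - 2 * (1 / (innerA A v v).re)
            * ‖innerA A u v‖ ^ 2
          + (1 / (innerA A v v).re) ^ 2 * ‖innerA A u v‖ ^ 2
            * (innerA A v v).re) * (innerA A v v).re
          = (innerA A u u).re * (innerA A v v).re - ‖innerA A u v‖ ^ 2 := by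
        field_simp
        ring
      rw [e] at h2
      linarith
  have := Real.sqrt_le_sqrt hsq
  rwa [Real.sqrt_sq (norm_nonneg _), Real.sqrt_mul hu, ← normA, ← normA] at this

lemma normA_add_le (hA : A.IsPositive) (u v : H) :
    normA A (u + v) ≤ normA A u + normA A v := by
  have h : (innerA A (u + v) (u + v)).re ≤ (normA A u + normA A v) ^ 2 := by
    have he := expandA hA u v 1
    simp only [one_smul, one_mul, map_one, norm_one] at he
    rw [he]
    have h1 : (innerA A u v).re ≤ ‖innerA A u v‖ := Complex.re_le_norm _
    have h2 := cauchyA hA u v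
    have h3 := normA_sq hA u
    have h4 := normA_sq hA v
    nlinarith [normA_nonneg (A := A) u, normA_nonneg (A := A) v]
  have := Real.sqrt_le_sqrt h
  rwa [Real.sqrt_sq (add_nonneg (normA_nonneg u) (normA_nonneg v))] at this

lemma normA_rev (hA : A.IsPositive) (u v : H) :
    normA A v - normA A u ≤ normA A (u + v) := by
  have hneg : normA A (-u) = normA A u := by
    have := normA_smul hA (-1) u
    simpa using this
  have h := normA_add_le hA (u + v) (-u)
  simp only [add_neg_cancel_comm] at h
  linarith [h, hneg.ge, hneg.le]
end more

set_option maxHeartbeats 1000000 in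
theorem stmt13 [CompleteSpace H] (A T S : H →L[ℂ] H) (hA : A.IsPositive)
    (hT : ABounded A T) (hS : ABounded A S) (hm : 0 < mA A S) :
    ∃! ζ₀ : ℂ, ∀ γ : ℂ,
      opNormA A (T + ζ₀ • S) ^ 2 + ‖γ‖ ^ 2 * mA A S ^ 2 ≤
        opNormA A ((T + ζ₀ • S) + γ • S) ^ 2 := by
  obtain ⟨cT, hcT, hTb⟩ := hT
  obtain ⟨cS, hcS, hSb⟩ := hS
  set m := mA A S with hmdef
  have hmne : m ≠ 0 := ne_of_gt hm
  have hm0 : (0:ℝ) ≤ m := hm.le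
  -- a unit vector exists
  have hSne : {r : ℝ | ∃ x : H, normA A x = 1 ∧ r = normA A (S x)}.Nonempty := by
    by_contra hemp
    rw [Set.not_nonempty_iff_eq_empty] at hemp
    have : m = 0 := by rw [hmdef, mA, hemp]; exact Real.sInf_empty
    exact hmne this
  obtain ⟨r0, e, he, hr0⟩ := hSne
  have hm_le : ∀ x : H, normA A x = 1 → m ≤ normA A (S x) := by
    intro x hx
    refine csInf_le ⟨0, ?_⟩ ⟨x, hx, rfl⟩
    rintro r ⟨y, hy, rfl⟩; exact normA_nonneg _
  set F : ℂ → ℝ := fun ζ => opNormA A (T + ζ • S) with hF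
  have hbdd : ∀ ζ : ℂ,
      BddAbove {r : ℝ | ∃ x : H, normA A x = 1 ∧ r = normA A ((T + ζ • S) x)} := by
    intro ζ
    refine ⟨cT + ‖ζ‖ * cS, ?_⟩
    rintro r ⟨x, hx, rfl⟩
    have h1 : normA A ((T + ζ • S) x) ≤ normA A (T x) + normA A (ζ • S x) :=
      normA_add_le hA _ _
    have h2 : normA A (ζ • S x) = ‖ζ‖ * normA A (S x) := normA_smul hA _ _
    have h3 := hTb x
    have h4 : ‖ζ‖ * normA A (S x) ≤ ‖ζ‖ * (cS * normA A x) :=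
      mul_le_mul_of_nonneg_left (hSb x) (norm_nonneg _)
    rw [hx] at h3 h4
    simp only [mul_one] at h3 h4
    linarith
  have hle : ∀ (ζ : ℂ) (x : H), normA A x = 1 → normA A ((T + ζ • S) x) ≤ F ζ :=
    fun ζ x hx => le_csSup (hbdd ζ) ⟨x, hx, rfl⟩
  have hFle : ∀ (ζ : ℂ) (M : ℝ),
      (∀ x : H, normA A x = 1 → normA A ((T + ζ • S) x) ≤ M) → F ζ ≤ M := by
    intro ζ M h
    refine csSup_le ⟨normA A ((T + ζ • S) e), e, he, rfl⟩ ?_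
    rintro r ⟨x, hx, rfl⟩; exact h x hx
  have hF0 : ∀ ζ, 0 ≤ F ζ := fun ζ => (normA_nonneg _).trans (hle ζ e he)
  have hlip : ∀ ζ ζ' : ℂ, F ζ ≤ F ζ' + ‖ζ - ζ'‖ * cS := by
    intro ζ ζ'
    refine hFle ζ _ (fun x hx => ?_)
    have hid : (T + ζ • S) x = (T + ζ' • S) x + (ζ - ζ') • S x := by
      simp only [ContinuousLinearMap.add_apply, ContinuousLinearMap.coe_smul', Pi.smul_apply,
        sub_smul]
      abel
    rw [hid]
    have h1 : normA A ((T + ζ' • S) x + (ζ - ζ') • S x)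
        ≤ normA A ((T + ζ' • S) x) + normA A ((ζ - ζ') • S x) := normA_add_le hA _ _
    have h2 : normA A ((ζ - ζ') • S x) = ‖ζ - ζ'‖ * normA A (S x) :=
      normA_smul hA _ _
    have h3 := hle ζ' x hx
    have h4 : normA A (S x) ≤ cS := by
      have := hSb x; rwa [hx, mul_one] at this
    have h5 : ‖ζ - ζ'‖ * normA A (S x) ≤ ‖ζ - ζ'‖ * cS :=
      mul_le_mul_of_nonneg_left h4 (norm_nonneg _)
    linarith
  have hcont : Continuous F := by
    have hL : LipschitzWith (Real.toNNReal cS) F := by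
      apply LipschitzWith.of_dist_le_mul
      intro a b
      rw [Real.dist_eq, Complex.dist_eq, Real.coe_toNNReal _ hcS.le, abs_le]
      constructor
      · have h := hlip b a
        rw [norm_sub_rev b a] at h
        linarith
      · have h := hlip a b
        linarith
    exact hL.continuous
  have hcoer : ∀ ζ : ℂ, m * ‖ζ‖ - cT ≤ F ζ := by
    intro ζ
    have h1 : normA A (T e + ζ • S e) ≤ F ζ := hle ζ e he
    have h2 := normA_rev hA (T e) (ζ • S e)
    have h3 : normA A (ζ • S e) = ‖ζ‖ * normA A (S e) := normA_smul hA _ _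
    have h4 : m ≤ normA A (S e) := hm_le e he
    have h5 : normA A (T e) ≤ cT := by
      have := hTb e; rwa [he, mul_one] at this
    have h6 : ‖ζ‖ * m ≤ ‖ζ‖ * normA A (S e) :=
      mul_le_mul_of_nonneg_left h4 (norm_nonneg _)
    nlinarith [h1, h2, h3, h5, h6]
  set R₀ := (F 0 + 1 + cT) / m with hR₀
  have hRpos : 0 < R₀ := div_pos (by linarith [hF0 0]) hm
  obtain ⟨ζ₀, hζ₀mem, hζ₀min⟩ := (isCompact_closedBall (0:ℂ) R₀).exists_isMinOn
    ⟨0, Metric.mem_closedBall_self hRpos.le⟩ hcont.continuousOn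
  have hglobal : ∀ ζ : ℂ, F ζ₀ ≤ F ζ := by
    intro ζ
    by_cases hζ : ζ ∈ Metric.closedBall (0:ℂ) R₀
    · exact hζ₀min hζ
    · simp only [Metric.mem_closedBall, not_le, Complex.dist_eq, sub_zero] at hζ
      have h2 : m * R₀ = F 0 + 1 + cT := by rw [hR₀]; field_simp
      have h3 := hcoer ζ
      have h4 : F ζ₀ ≤ F 0 := hζ₀min (Metric.mem_closedBall_self hRpos.le)
      have h5 : m * R₀ ≤ m * ‖ζ‖ := mul_le_mul_of_nonneg_left hζ.le hm0
      linarith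
  have hop : ∀ a b : ℂ, (T + a • S) + b • S = T + (a + b) • S := by
    intro a b; rw [add_smul, add_assoc]
  have hmain : ∀ γ : ℂ, F ζ₀ ^ 2 + ‖γ‖ ^ 2 * m ^ 2 ≤ F (ζ₀ + γ) ^ 2 := by
    intro γ
    by_cases hγ : γ = 0
    · simp [hγ]
    have hval : ∀ (s : ℝ) (x : H), normA A ((T + (ζ₀ + (s:ℂ) * γ) • S) x) ^ 2
        = (innerA A (T x + ζ₀ • S x) (T x + ζ₀ • S x)).re
          + 2 * s * (γ * innerA A (T x + ζ₀ • S x) (S x)).re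
          + s ^ 2 * (‖γ‖ ^ 2 * (innerA A (S x) (S x)).re) := by
      intro s x
      have hid : (T + (ζ₀ + (s:ℂ) * γ) • S) x
          = (T x + ζ₀ • S x) + ((s:ℂ) * γ) • S x := by
        simp only [ContinuousLinearMap.add_apply, ContinuousLinearMap.coe_smul',
          Pi.smul_apply, add_smul]
        exact (add_assoc _ _ _).symm
      rw [hid, normA_sq hA, expandA hA]
      have e1 : (((s:ℂ) * γ) * innerA A (T x + ζ₀ • S x) (S x)).re
          = s * (γ * innerA A (T x + ζ₀ • S x) (S x)).re := by
        rw [mul_assoc, Complex.re_ofReal_mul]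
      have e2 : ‖(s:ℂ) * γ‖ ^ 2 = s ^ 2 * ‖γ‖ ^ 2 := by
        rw [norm_mul, Complex.norm_real, mul_pow, Real.norm_eq_abs, sq_abs]
      rw [e1, e2]; ring
    by_contra hlt
    push_neg at hlt
    set P := ‖γ‖ ^ 2 * m ^ 2 with hP
    have hPpos : 0 < P := by
      have hγ' : 0 < ‖γ‖ := norm_pos_iff.mpr hγ
      positivity
    set δ := F ζ₀ ^ 2 + P - F (ζ₀ + γ) ^ 2 with hδ
    have hδpos : 0 < δ := by rw [hδ]; linarith
    have hconv : ∀ t : ℝ, 0 ≤ t → t ≤ 1 →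
        F (ζ₀ + (t : ℂ) * γ) ^ 2
          ≤ (1 - t) * F ζ₀ ^ 2 + t * F (ζ₀ + γ) ^ 2 - t * (1 - t) * P := by
      intro t ht0 ht1
      have hxall : ∀ x : H, normA A x = 1 →
          normA A ((T + (ζ₀ + (t:ℂ) * γ) • S) x) ^ 2
            ≤ (1 - t) * F ζ₀ ^ 2 + t * F (ζ₀ + γ) ^ 2 - t * (1 - t) * P := by
        intro x hx'
        have hq := hval t x
        have h0 := hval 0 x
        have h1 := hval 1 x
        simp only [Complex.ofReal_zero, zero_mul, add_zero, mul_zero, zero_pow, ne_eq,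
          OfNat.ofNat_ne_zero, not_false_iff, Complex.ofReal_one, one_mul, mul_one,
          one_pow] at h0 h1
        have ha : (innerA A (T x + ζ₀ • S x) (T x + ζ₀ • S x)).re ≤ F ζ₀ ^ 2 := by
          rw [← h0]
          exact pow_le_pow_left₀ (normA_nonneg _) (hle ζ₀ x hx') 2
        have hY := pow_le_pow_left₀ (normA_nonneg _) (hle (ζ₀ + γ) x hx') 2
        rw [h1] at hY
        have hsv : m ^ 2 ≤ (innerA A (S x) (S x)).re := by
          rw [← normA_sq hA]
          exact pow_le_pow_left₀ hm0 (hm_le x hx') 2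
        rw [hq]
        have hp1 : (0:ℝ) ≤ (1 - t) * (F ζ₀ ^ 2
            - (innerA A (T x + ζ₀ • S x) (T x + ζ₀ • S x)).re) :=
          mul_nonneg (by linarith) (by linarith)
        have hp2 : (0:ℝ) ≤ t * (F (ζ₀ + γ) ^ 2
            - ((innerA A (T x + ζ₀ • S x) (T x + ζ₀ • S x)).re
              + 2 * (γ * innerA A (T x + ζ₀ • S x) (S x)).re
              + ‖γ‖ ^ 2 * (innerA A (S x) (S x)).re)) :=
          mul_nonneg ht0 (by linarith)
        have hp3 : (0:ℝ) ≤ (t * (1 - t) * ‖γ‖ ^ 2)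
            * ((innerA A (S x) (S x)).re - m ^ 2) :=
          mul_nonneg (mul_nonneg (mul_nonneg ht0 (by linarith)) (sq_nonneg _))
            (by linarith)
        rw [hP]
        nlinarith [hp1, hp2, hp3]
      have hRHS0 : 0 ≤ (1 - t) * F ζ₀ ^ 2 + t * F (ζ₀ + γ) ^ 2 - t * (1 - t) * P :=
        le_trans (sq_nonneg _) (hxall e he)
      have hsqrt : F (ζ₀ + (t:ℂ) * γ)
          ≤ Real.sqrt ((1 - t) * F ζ₀ ^ 2 + t * F (ζ₀ + γ) ^ 2 - t * (1 - t) * P) := by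
        refine hFle _ _ (fun x hx' => ?_)
        have h := Real.sqrt_le_sqrt (hxall x hx')
        rwa [Real.sqrt_sq (normA_nonneg _)] at h
      calc F (ζ₀ + (t:ℂ) * γ) ^ 2
          ≤ Real.sqrt ((1 - t) * F ζ₀ ^ 2 + t * F (ζ₀ + γ) ^ 2 - t * (1 - t) * P) ^ 2 :=
            pow_le_pow_left₀ (hF0 _) hsqrt 2
        _ = _ := Real.sq_sqrt hRHS0
    set t₀ := min (1/2 : ℝ) (δ / (2 * P)) with ht₀def
    have ht₀pos : 0 < t₀ := lt_min (by norm_num) (by positivity)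
    have ht₀le : t₀ ≤ 1 := le_trans (min_le_left _ _) (by norm_num)
    have hc := hconv t₀ ht₀pos.le ht₀le
    have ht₀P : t₀ * P ≤ δ / 2 := by
      have h := min_le_right (1/2 : ℝ) (δ / (2 * P))
      calc t₀ * P ≤ (δ / (2 * P)) * P := mul_le_mul_of_nonneg_right h hPpos.le
        _ = δ / 2 := by field_simp
    have hge : F ζ₀ ^ 2 ≤ F (ζ₀ + (t₀:ℂ) * γ) ^ 2 :=
      pow_le_pow_left₀ (hF0 _) (hglobal _) 2
    have hYval : F (ζ₀ + γ) ^ 2 = F ζ₀ ^ 2 + P - δ := by rw [hδ]; ring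
    have hm2 := mul_le_mul_of_nonneg_left ht₀P ht₀pos.le
    clear_value t₀
    clear_value δ
    clear_value P
    nlinarith [hc, hge, ht₀P, ht₀pos, hδpos, hm2, hYval]
  refine ⟨ζ₀, fun γ => ?_, fun ζ₁ h₁ => ?_⟩
  · rw [hop ζ₀ γ]
    have h := hmain γ
    simp only [hF] at h
    exact h
  · have k1 := h₁ (ζ₀ - ζ₁)
    rw [hop ζ₁ (ζ₀ - ζ₁)] at k1
    have e1 : ζ₁ + (ζ₀ - ζ₁) = ζ₀ := by ring
    rw [e1] at k1
    have k2 := hmain (ζ₁ - ζ₀)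
    have e2 : ζ₀ + (ζ₁ - ζ₀) = ζ₁ := by ring
    rw [e2] at k2
    simp only [hF] at k2
    have e3 : ‖ζ₀ - ζ₁‖ = ‖ζ₁ - ζ₀‖ := norm_sub_rev _ _
    rw [e3] at k1
    have habs0 : ‖ζ₁ - ζ₀‖ = 0 := by
      by_contra hne0
      have habs : 0 < ‖ζ₁ - ζ₀‖ := (norm_nonneg _).lt_of_ne (Ne.symm hne0)
      have hpos : 0 < ‖ζ₁ - ζ₀‖ ^ 2 * m ^ 2 :=
        mul_pos (pow_pos habs 2) (pow_pos hm 2)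
      linarith
    have : ζ₁ - ζ₀ = 0 := norm_eq_zero.mp habs0
    exact sub_eq_zero.mp this
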